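/- For all x, y ∈ ℝ⁷, ‖x × y‖² = ‖x‖²‖y‖² − ⟨x, y⟩². In particular, if x and y are orthogonal then ‖x × y‖ = ‖x‖·‖y‖, so the cross product of two orthonormal vectors is a unit vector. -/

import Mathlib

noncomputable section

open scoped InnerProductSpace

/-- `3 × 3` determinant of coordinates `a, b, c` of `(x, y, z)`. -/
def det3 (a b c : Fin 7) (x y z : EuclideanSpace ℝ (Fin 7)) : ℝ :=
  x a * (y b * z c - y c * z b) - x b * (y a * z c - y c * z a) +
    x c * (y a * z b - y b * z a)

/-- The associative calibration `φ` of Harvey–Lawson on `ℝ⁷`. -/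
def phi (x y z : EuclideanSpace ℝ (Fin 7)) : ℝ :=
  det3 4 5 6 x y z - det3 4 0 1 x y z - det3 4 2 3 x y z -
    det3 5 0 2 x y z - det3 5 3 1 x y z - det3 6 0 3 x y z - det3 6 1 2 x y z

/-- The 7-dimensional Lagrange-type identity, as a polynomial identity. -/
theorem key_identity (x0 x1 x2 x3 x4 x5 x6 y0 y1 y2 y3 y4 y5 y6 : ℝ) :
    (-(x1*y4) - x2*y5 - x3*y6 + x4*y1 + x5*y2 + x6*y3)^2 +
    (x0*y4 - x2*y6 + x3*y5 - x4*y0 - x5*y3 + x6*y2)^2 +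
    (x0*y5 + x1*y6 - x3*y4 + x4*y3 - x5*y0 - x6*y1)^2 +
    (x0*y6 - x1*y5 + x2*y4 - x4*y2 + x5*y1 - x6*y0)^2 +
    (-(x0*y1) + x1*y0 - x2*y3 + x3*y2 + x5*y6 - x6*y5)^2 +
    (-(x0*y2) + x1*y3 + x2*y0 - x3*y1 - x4*y6 + x6*y4)^2 +
    (-(x0*y3) - x1*y2 + x2*y1 + x3*y0 + x4*y5 - x5*y4)^2 =
    (x0^2+x1^2+x2^2+x3^2+x4^2+x5^2+x6^2) * (y0^2+y1^2+y2^2+y3^2+y4^2+y5^2+y6^2)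
      - (x0*y0+x1*y1+x2*y2+x3*y3+x4*y4+x5*y5+x6*y6)^2 := by
  ring

set_option maxHeartbeats 1000000 in
/-- For the cross product `x × y` determined by `⟪x × y, z⟫ = φ(x, y, z)`,
one has `‖x × y‖² = ‖x‖²‖y‖² − ⟪x, y⟫²`; in particular, for orthogonal `x, y`
it satisfies `‖x × y‖ = ‖x‖·‖y‖`, so the cross product of two orthonormal
vectors is a unit vector. -/
theorem norm_cross_sq (cross : EuclideanSpace ℝ (Fin 7) → EuclideanSpace ℝ (Fin 7) →
      EuclideanSpace ℝ (Fin 7))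
    (hcross : ∀ x y z, ⟪cross x y, z⟫_ℝ = phi x y z) :
    ∀ x y : EuclideanSpace ℝ (Fin 7),
      ‖cross x y‖ ^ 2 = ‖x‖ ^ 2 * ‖y‖ ^ 2 - ⟪x, y⟫_ℝ ^ 2 ∧
      (⟪x, y⟫_ℝ = 0 → ‖cross x y‖ = ‖x‖ * ‖y‖) := by
  intro x y
  have hc : ∀ i : Fin 7, cross x y i = phi x y (EuclideanSpace.single i 1) := by
    intro i
    rw [← hcross x y (EuclideanSpace.single i 1)]
    simp [PiLp.inner_apply, EuclideanSpace.single_apply]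
  have h0 : cross x y 0 =
      -(x 1 * y 4) - x 2 * y 5 - x 3 * y 6 + x 4 * y 1 + x 5 * y 2 + x 6 * y 3 := by
    rw [hc 0]; simp [phi, det3, EuclideanSpace.single_apply]; ring
  have h1 : cross x y 1 =
      x 0 * y 4 - x 2 * y 6 + x 3 * y 5 - x 4 * y 0 - x 5 * y 3 + x 6 * y 2 := by
    rw [hc 1]; simp [phi, det3, EuclideanSpace.single_apply]; ring
  have h2 : cross x y 2 =
      x 0 * y 5 + x 1 * y 6 - x 3 * y 4 + x 4 * y 3 - x 5 * y 0 - x 6 * y 1 := by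
    rw [hc 2]; simp [phi, det3, EuclideanSpace.single_apply]; ring
  have h3 : cross x y 3 =
      x 0 * y 6 - x 1 * y 5 + x 2 * y 4 - x 4 * y 2 + x 5 * y 1 - x 6 * y 0 := by
    rw [hc 3]; simp [phi, det3, EuclideanSpace.single_apply]; ring
  have h4 : cross x y 4 =
      -(x 0 * y 1) + x 1 * y 0 - x 2 * y 3 + x 3 * y 2 + x 5 * y 6 - x 6 * y 5 := by
    rw [hc 4]; simp [phi, det3, EuclideanSpace.single_apply]; ring
  have h5 : cross x y 5 =
      -(x 0 * y 2) + x 1 * y 3 + x 2 * y 0 - x 3 * y 1 - x 4 * y 6 + x 6 * y 4 := by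
    rw [hc 5]; simp [phi, det3, EuclideanSpace.single_apply]; ring
  have h6 : cross x y 6 =
      -(x 0 * y 3) - x 1 * y 2 + x 2 * y 1 + x 3 * y 0 + x 4 * y 5 - x 5 * y 4 := by
    rw [hc 6]; simp [phi, det3, EuclideanSpace.single_apply]; ring
  have sqsum : ∀ v : EuclideanSpace ℝ (Fin 7),
      ‖v‖ ^ 2 = v 0 ^ 2 + v 1 ^ 2 + v 2 ^ 2 + v 3 ^ 2 + v 4 ^ 2 + v 5 ^ 2 + v 6 ^ 2 := by
    intro v
    rw [← real_inner_self_eq_norm_sq]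
    simp only [PiLp.inner_apply, Fin.sum_univ_seven, RCLike.inner_apply, conj_trivial]
    ring
  have hip : ⟪x, y⟫_ℝ =
      x 0 * y 0 + x 1 * y 1 + x 2 * y 2 + x 3 * y 3 + x 4 * y 4 + x 5 * y 5 + x 6 * y 6 := by
    simp [PiLp.inner_apply, Fin.sum_univ_seven]
    ring
  have hmain : ‖cross x y‖ ^ 2 = ‖x‖ ^ 2 * ‖y‖ ^ 2 - ⟪x, y⟫_ℝ ^ 2 := by
    rw [sqsum (cross x y), sqsum x, sqsum y, hip, h0, h1, h2, h3, h4, h5, h6]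
    exact key_identity _ _ _ _ _ _ _ _ _ _ _ _ _ _
  refine ⟨hmain, fun h => ?_⟩
  have h2' : ‖cross x y‖ ^ 2 = (‖x‖ * ‖y‖) ^ 2 := by rw [hmain, h]; ring
  nlinarith [norm_nonneg (cross x y), mul_nonneg (norm_nonneg x) (norm_nonneg y),
    sq_nonneg (‖cross x y‖ - ‖x‖ * ‖y‖), sq_nonneg (‖cross x y‖ + ‖x‖ * ‖y‖)]
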